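/- arXiv:1709.04039 — 2 statements merged into one kernel-verified Lean document; each statement's English description precedes it below -/
import Mathlib

section
/- For any prime p with p ≡ 2 (mod 3) and any odd a ≥ 1, and any natural number d ≤ p^a with d ≡ 1 (mod 3), the sum ∑_{n=0}^{p^a - 1} C(2n, n+d) is congruent to 1 modulo p. -/
open Finset Polynomial


-- Pascal squared
lemma pascal2 (k d : ℕ) :
    (2*(k+1)).choose ((k+1) + (d+1)) =
      (2*k).choose (k + d) + 2 * (2*k).choose (k + d + 1) + (2*k).choose (k + d + 2) := by
  have h1 : 2*(k+1) = (2*k+1) + 1 := by ring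
  have h2 : (k+1) + (d+1) = (k + d + 1) + 1 := by ring
  rw [h1, h2, Nat.choose_succ_succ', Nat.choose_succ_succ' (2*k) (k+d),
    show k + d + 1 + 1 = (k + d + 1) + 1 from rfl, Nat.choose_succ_succ' (2*k) (k+d+1)]
  ring

-- key nat identity
lemma key (N d : ℕ) :
    (∑ n ∈ range N, (2*n).choose (n+d)) + 2 * (∑ n ∈ range N, (2*n).choose (n+d+1))
      + (∑ n ∈ range N, (2*n).choose (n+d+2))
    = (∑ n ∈ range N, (2*n).choose (n+d+1)) + (2*N).choose (N+d+1) := by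
  have L : ∑ n ∈ range N, (2*(n+1)).choose ((n+1) + (d+1))
      = (∑ n ∈ range N, (2*n).choose (n+d)) + 2 * (∑ n ∈ range N, (2*n).choose (n+d+1))
        + (∑ n ∈ range N, (2*n).choose (n+d+2)) := by
    rw [Finset.sum_congr rfl fun n _ => pascal2 n d]
    rw [Finset.sum_add_distrib, Finset.sum_add_distrib, Finset.mul_sum]
  have R : ∑ n ∈ range N, (2*(n+1)).choose ((n+1) + (d+1))
      = (∑ n ∈ range N, (2*n).choose (n+d+1)) + (2*N).choose (N+d+1) := by
    have := Finset.sum_range_succ' (fun n => (2*n).choose (n + (d+1))) N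
    -- ∑_{i<N+1} f i = ∑_{i<N} f(i+1) + f 0
    have h0 : (2*0).choose (0 + (d+1)) = 0 := by simp [Nat.choose_eq_zero_of_lt]
    have hs := Finset.sum_range_succ (fun n => (2*n).choose (n + (d+1))) N
    -- combine
    have : (∑ n ∈ range N, (2*(n+1)).choose ((n+1) + (d+1)))
        = ∑ n ∈ range (N+1), (2*n).choose (n + (d+1)) := by
      rw [Finset.sum_range_succ' (fun n => (2*n).choose (n + (d+1))) N, h0, add_zero]
    rw [this, hs]; rfl
  omega

lemma lucas0 (p a j : ℕ) (hp : p.Prime) (hj : 1 ≤ j) (hjN : j < p^a) :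
    (((2*p^a).choose (p^a + j) : ZMod p)) = 0 := by
  haveI : Fact p.Prime := ⟨hp⟩
  set N := p^a with hN
  have hpoly : ((X + 1 : (ZMod p)[X]))^(2*N) = X^(2*N) + 2*X^N + 1 := by
    have h1 : ((X + 1 : (ZMod p)[X]))^N = X^N + 1 := by
      rw [hN, add_pow_char_pow, one_pow]
    rw [show 2*N = N + N from by ring, pow_add, h1]
    ring
  have := congrArg (fun q : (ZMod p)[X] => q.coeff (N + j)) hpoly
  simp only [coeff_X_add_one_pow, coeff_add, coeff_X_pow, coeff_one] at this
  rw [this]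
  have h1 : ¬ (N + j = 2*N) := by omega
  have h2 : ¬ (N + j = N) := by omega
  have h3 : ¬ (N + j = 0) := by omega
  simp [h1, h2, h3, show j ≠ 0 by omega]

theorem stmt6 (p a d : ℕ) (hp : p.Prime) (h3 : p % 3 = 2) (ha : 1 ≤ a) (hodd : Odd a)
    (hd : d ≤ p ^ a) (hd3 : d % 3 = 1) :
    (∑ n ∈ Finset.range (p^a), ((2*n).choose (n + d) : ℤ)) ≡ 1 [ZMOD (p : ℤ)] := by
  set N := p^a with hN
  have hN1 : 1 ≤ N := Nat.one_le_pow _ _ hp.pos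
  -- N % 3 = 2
  have hN3 : N % 3 = 2 := by
    obtain ⟨m, hm⟩ := hodd
    rw [hN, Nat.pow_mod, h3, hm, pow_succ, pow_mul, Nat.mul_mod, Nat.pow_mod]
    norm_num
  -- reduce to ZMod p
  rw [show ((1:ℤ)) = ((1:ℕ):ℤ) from by norm_num]
  rw [← ZMod.intCast_eq_intCast_iff]
  push_cast
  -- abbreviation
  set s : ℕ → ZMod p := fun e => ∑ n ∈ range N, ((2*n).choose (n+e) : ZMod p) with hs
  show s d = 1
  have rel : ∀ e, s e + s (e+1) + s (e+2) = (((2*N).choose (N+e+1) : ℕ) : ZMod p) := by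
    intro e
    have h := congrArg (fun m : ℕ => (m : ZMod p)) (key N e)
    push_cast at h
    simp only [hs]
    push_cast
    simp only [← Nat.add_assoc]
    linear_combination h
  have szero : ∀ e, N ≤ e → s e = 0 := by
    intro e he
    simp only [hs]
    apply Finset.sum_eq_zero
    intro n hn
    rw [Finset.mem_range] at hn
    rw [Nat.choose_eq_zero_of_lt (by omega)]
    norm_num
  have top : s (N-1) = 1 := by
    have h := rel (N-1)
    rw [szero (N-1+1) (by omega), szero (N-1+2) (by omega)] at h
    rw [show N + (N-1) + 1 = 2*N from by omega, Nat.choose_self] at h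
    simpa using h
  have step : ∀ e, e + 3 ≤ N → s e = s (e+3) := by
    intro e he
    have h1 := rel e
    have h2 := rel (e+1)
    have z1 : (((2*N).choose (N+e+1) : ℕ) : ZMod p) = 0 :=
      lucas0 p a (e+1) hp (by omega) (by omega)
    have z2 : (((2*N).choose (N+(e+1)+1) : ℕ) : ZMod p) = 0 :=
      lucas0 p a (e+2) hp (by omega) (by omega)
    rw [z1] at h1
    rw [z2] at h2
    have he1 : s (e+1+1) = s (e+2) := rfl
    have he2 : s (e+1+2) = s (e+3) := rfl
    rw [he1, he2] at h2
    linear_combination h1 - h2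
  have chain : ∀ j e, e + 3*j = N - 1 → s e = 1 := by
    intro j
    induction j with
    | zero => intro e heq; simp at heq; rw [heq]; exact top
    | succ j ih =>
      intro e heq
      have h1 : (e+3) + 3*j = N - 1 := by omega
      rw [step e (by omega)]
      exact ih (e+3) h1
  have hdN : d ≤ N - 1 := by omega
  have h3d : (N - 1 - d) % 3 = 0 := by omega
  exact chain ((N-1-d)/3) d (by omega)
end

section
/- For any prime p > 3 with p ≡ 2 (mod 3), and any even a ≥ 1, the sum of the Catalan numbers ∑_{n=0}^{p^a - 1} C_n is congruent to 1 modulo p. -/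
open Finset

set_option linter.unusedSectionVars false
set_option linter.unusedVariables false
set_option maxHeartbeats 1000000


section aux

private lemma cat_int (n : ℕ) :
    (catalan n : ℤ) = ((2*n).choose n : ℤ) - ((2*n).choose (n+1) : ℤ) := by
  have h1 : ((n : ℤ) + 1) * (catalan n : ℤ) = ((2*n).choose n : ℤ) := by
    exact_mod_cast congrArg (Nat.cast (R := ℤ)) (succ_mul_catalan_eq_centralBinom n)
  have h2 : ((2*n).choose (n+1) : ℤ) * ((n : ℤ) + 1) = ((2*n).choose n : ℤ) * n := by
    have h := Nat.choose_succ_right_eq (2*n) n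
    have h2n : 2*n - n = n := by omega
    rw [h2n] at h
    exact_mod_cast h
  have hne : ((n : ℤ) + 1) ≠ 0 := by positivity
  apply mul_left_cancel₀ hne
  linear_combination h1 + h2

variable {p : ℕ} [Fact p.Prime]

private lemma lucasZ (n k : ℕ) : ((n.choose k : ℕ) : ZMod p) =
    (((n % p).choose (k % p) : ℕ) : ZMod p) * (((n / p).choose (k / p) : ℕ) : ZMod p) := by
  have h := Choose.choose_modEq_choose_mod_mul_choose_div_nat (p := p) (n := n) (k := k)
  have h2 := (ZMod.natCast_eq_natCast_iff _ _ _).mpr h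
  push_cast at h2
  exact h2

private lemma cat_cast (n : ℕ) :
    ((catalan n : ℕ) : ZMod p) = (((2*n).choose n : ℕ) : ZMod p) - (((2*n).choose (n+1) : ℕ) : ZMod p) := by
  have h : ((catalan n : ℤ) : ZMod p) = (((2*n).choose n : ℤ) : ZMod p) - (((2*n).choose (n+1) : ℤ) : ZMod p) := by
    rw [cat_int n]; push_cast; ring
  push_cast at h
  exact h

private lemma qr_mod (q r : ℕ) (hr : r < p) : (q * p + r) % p = r := by
  rw [add_comm, Nat.add_mul_mod_self_right, Nat.mod_eq_of_lt hr]

private lemma qr_div (q r : ℕ) (hr : r < p) : (q * p + r) / p = q := by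
  have hp0 : 0 < p := (Fact.out : p.Prime).pos
  rw [add_comm, Nat.add_mul_div_right _ _ hp0, Nat.div_eq_of_lt hr, zero_add]

private lemma cb_block (hp3 : 3 < p) (hodd : p % 2 = 1) (q r : ℕ) (hr : r < p) :
    ((Nat.centralBinom (q*p+r) : ℕ) : ZMod p) =
      if 2*r < p then ((Nat.centralBinom q : ℕ) : ZMod p) * ((Nat.centralBinom r : ℕ) : ZMod p)
      else 0 := by
  rw [Nat.centralBinom_eq_two_mul_choose]
  split_ifs with h2r
  · have he : 2*(q*p+r) = (2*q) * p + 2*r := by ring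
    rw [he, lucasZ, qr_mod _ _ h2r, qr_div _ _ h2r, qr_mod _ _ hr, qr_div _ _ hr,
      Nat.centralBinom_eq_two_mul_choose, Nat.centralBinom_eq_two_mul_choose]
    ring
  · have hle : p ≤ 2*r := by omega
    have he : 2*(q*p+r) = (2*q+1) * p + (2*r - p) := by zify [hle]; ring
    have h1 : 2*r - p < p := by omega
    rw [he, lucasZ, qr_mod _ _ h1, qr_mod _ _ hr,
      Nat.choose_eq_zero_of_lt (show 2*r - p < r by omega)]
    simp

private lemma cat_block (hp3 : 3 < p) (hodd : p % 2 = 1) (q r : ℕ) (hr : r < p) :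
    ((catalan (q*p+r) : ℕ) : ZMod p) =
      if 2*r < p then ((Nat.centralBinom q : ℕ) : ZMod p) * ((catalan r : ℕ) : ZMod p)
      else if r = p - 1 then ((catalan q : ℕ) : ZMod p) - 2 * ((Nat.centralBinom q : ℕ) : ZMod p)
      else 0 := by
  rw [cat_cast]
  split_ifs with h2r hr1
  · -- 2r < p
    have hr1 : r + 1 < p := by omega
    have he : 2*(q*p+r) = (2*q) * p + 2*r := by ring
    have he2 : q*p+r+1 = q*p + (r+1) := by ring
    rw [he, he2, lucasZ (2*q*p+2*r) (q*p+r), lucasZ (2*q*p+2*r) (q*p+(r+1)),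
      qr_mod _ _ h2r, qr_div _ _ h2r, qr_mod _ _ hr, qr_div _ _ hr,
      qr_mod _ _ hr1, qr_div _ _ hr1, cat_cast r, Nat.centralBinom_eq_two_mul_choose]
    ring
  · -- r = p - 1
    subst hr1
    have hpp : 2 ≤ p := by omega
    have he : 2*(q*p+(p-1)) = (2*q+1) * p + (p-2) := by zify [hpp, show 1 ≤ p by omega]; ring
    have he2 : q*p+(p-1)+1 = (q+1) * p + 0 := by zify [show 1 ≤ p by omega]; ring
    have h1 : p - 2 < p := by omega
    have h0 : (0:ℕ) < p := by omega
    rw [he, he2, lucasZ ((2*q+1)*p+(p-2)) (q*p+(p-1)), lucasZ ((2*q+1)*p+(p-2)) ((q+1)*p+0),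
      qr_mod _ _ h1, qr_div _ _ h1, qr_mod _ _ (show p-1 < p by omega),
      qr_div _ _ (show p-1 < p by omega), qr_mod _ _ h0, qr_div _ _ h0,
      Nat.choose_eq_zero_of_lt (show p-2 < p-1 by omega)]
    have hps : (2*q+1).choose (q+1) = (2*q).choose q + (2*q).choose (q+1) := by
      have := Nat.choose_succ_succ (2*q) q
      simpa [two_mul, Nat.add_assoc] using this
    rw [hps, Nat.centralBinom_eq_two_mul_choose, Nat.choose_zero_right]
    have hc := cat_cast (p := p) q
    push_cast at hc ⊢
    linear_combination -hc
  · -- p < 2r, r ≤ p - 2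
    have hrp : r + 1 < p := by omega
    have hle : p ≤ 2*r := by omega
    have he : 2*(q*p+r) = (2*q+1) * p + (2*r - p) := by zify [hle]; ring
    have he2 : q*p+r+1 = q*p + (r+1) := by ring
    have h1 : 2*r - p < p := by omega
    rw [he, he2, lucasZ ((2*q+1)*p+(2*r-p)) (q*p+r), lucasZ ((2*q+1)*p+(2*r-p)) (q*p+(r+1)),
      qr_mod _ _ h1, qr_mod _ _ hr, qr_mod _ _ hrp,
      Nat.choose_eq_zero_of_lt (show 2*r - p < r by omega),
      Nat.choose_eq_zero_of_lt (show 2*r - p < r+1 by omega)]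
    simp

end aux


section aux2
variable {p : ℕ} [Fact p.Prime]

private lemma cb_pow (hp3 : 3 < p) (hodd : p % 2 = 1) :
    ∀ r, r ≤ p/2 → ((Nat.centralBinom r : ℕ) : ZMod p) = (-4)^r * (((p/2).choose r : ℕ) : ZMod p) := by
  intro r
  induction r with
  | zero => simp
  | succ r ih =>
    intro hr
    have hrlt : r < p/2 := by omega
    have ih' := ih (by omega)
    have hne : ((r : ZMod p) + 1) ≠ 0 := by
      have : (((r+1 : ℕ)) : ZMod p) ≠ 0 := by
        rw [Ne, ZMod.natCast_eq_zero_iff]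
        intro hdvd
        have := Nat.le_of_dvd (by omega) hdvd
        omega
      push_cast at this
      exact this
    have hcb : ((r : ZMod p) + 1) * ((Nat.centralBinom (r+1) : ℕ) : ZMod p)
        = 2*(2*(r:ZMod p)+1) * ((Nat.centralBinom r : ℕ) : ZMod p) := by
      have h := Nat.succ_mul_centralBinom_succ r
      have h' := congrArg (Nat.cast (R := ZMod p)) h
      push_cast at h'
      linear_combination h'
    have hch : (((p/2).choose (r+1) : ℕ) : ZMod p) * ((r : ZMod p) + 1)
        = (((p/2).choose r : ℕ) : ZMod p) * (((p/2 : ℕ) : ZMod p) - (r : ZMod p)) := by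
      have h := Nat.choose_succ_right_eq (p/2) r
      have h' := congrArg (Nat.cast (R := ZMod p)) h
      push_cast [Nat.cast_sub (le_of_lt hrlt)] at h'
      linear_combination h'
    have hh : 2*(((p/2) : ℕ) : ZMod p) = -1 := by
      have he : 2*(p/2) = p - 1 := by omega
      have h' := congrArg (Nat.cast (R := ZMod p)) he
      push_cast [Nat.cast_sub (show 1 ≤ p by omega)] at h'
      rw [ZMod.natCast_self] at h'
      linear_combination h'
    apply mul_left_cancel₀ hne
    rw [hcb, ih' ]
    linear_combination (-(-4:ZMod p)^(r+1))*hch + (2*(-4:ZMod p)^r*(((p/2).choose r : ℕ) : ZMod p))*hh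

private lemma neg_three_pow (hp3 : 3 < p) (hodd : p % 2 = 1) (h3 : p % 3 = 2) :
    (-3 : ZMod p)^(p/2) = -1 := by
  have h3ne : (-3 : ZMod p) ≠ 0 := by
    have : (((3:ℕ)) : ZMod p) ≠ 0 := by
      rw [Ne, ZMod.natCast_eq_zero_iff]
      intro hdvd
      have := Nat.le_of_dvd (by norm_num) hdvd
      omega
    push_cast at this
    simpa using this
  have hnotsq : ¬ IsSquare (-3 : ZMod p) := by
    rintro ⟨y, hy⟩
    have h2ne : (2 : ZMod p) ≠ 0 := by
      have : (((2:ℕ)) : ZMod p) ≠ 0 := by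
        rw [Ne, ZMod.natCast_eq_zero_iff]
        intro hdvd
        have := Nat.le_of_dvd (by norm_num) hdvd
        omega
      push_cast at this
      exact this
    set ω : ZMod p := (y - 1) / 2 with hω
    have hquad : ω^2 + ω + 1 = 0 := by
      rw [hω]
      field_simp
      ring_nf
      linear_combination (-1 : ZMod p) * hy
    have hcube : ω^3 = 1 := by linear_combination (ω - 1) * hquad
    have hne1 : ω ≠ 1 := by
      intro h1
      rw [h1] at hquad
      apply h3ne
      have : (3 : ZMod p) = 0 := by linear_combination hquad
      rw [show (-3 : ZMod p) = -(3) by ring, this, neg_zero]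
    haveI : Fact (Nat.Prime 3) := ⟨by norm_num⟩
    have hord : orderOf ω = 3 := orderOf_eq_prime hcube hne1
    have hω0 : ω ≠ 0 := by
      intro h0
      rw [h0] at hcube
      simp at hcube
    have hdvd : orderOf ω ∣ p - 1 :=
      orderOf_dvd_of_pow_eq_one (ZMod.pow_card_sub_one_eq_one hω0)
    rw [hord] at hdvd
    omega
  have hsq : ((-3 : ZMod p)^(p/2)) * ((-3 : ZMod p)^(p/2)) = 1 := by
    rw [← pow_add]
    have he : p/2 + p/2 = p - 1 := by omega
    rw [he]
    exact ZMod.pow_card_sub_one_eq_one h3ne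
  have hne1' : (-3 : ZMod p)^(p/2) ≠ 1 :=
    fun h => hnotsq ((ZMod.euler_criterion p h3ne).mpr h)
  rcases mul_self_eq_one_iff.mp hsq with h | h
  · exact absurd h hne1'
  · exact h

private lemma M_eq (hp3 : 3 < p) (hodd : p % 2 = 1) (h3 : p % 3 = 2) :
    (∑ r ∈ range p, if 2*r < p then ((Nat.centralBinom r : ℕ) : ZMod p) else 0) = -1 := by
  rw [← Finset.sum_filter]
  have hfil : (range p).filter (fun r => 2*r < p) = range (p/2 + 1) := by
    ext x
    simp only [mem_filter, mem_range]
    omega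
  rw [hfil]
  rw [Finset.sum_congr rfl (fun r hr => cb_pow hp3 hodd r (by simpa using Nat.lt_succ_iff.mp (mem_range.mp hr)))]
  have hadd := add_pow (-4 : ZMod p) 1 (p/2)
  have : (∑ r ∈ range (p/2 + 1), (-4 : ZMod p)^r * (((p/2).choose r : ℕ) : ZMod p))
      = ((-4 : ZMod p) + 1)^(p/2) := by
    rw [hadd]
    apply Finset.sum_congr rfl
    intro k hk
    rw [one_pow, mul_one]
  rw [this, show ((-4 : ZMod p) + 1) = -3 by ring, neg_three_pow hp3 hodd h3]

end aux2


section aux3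
variable {p : ℕ} [Fact p.Prime]

private lemma sum_blocks (f : ℕ → ZMod p) (m : ℕ) :
    ∑ n ∈ range (m*p), f n = ∑ q ∈ range m, ∑ r ∈ range p, f (q*p + r) := by
  induction m with
  | zero => simp
  | succ m ih => rw [Nat.succ_mul, Finset.sum_range_add, ih, Finset.sum_range_succ]

private lemma B_rec (hp3 : 3 < p) (hodd : p % 2 = 1) (h3 : p % 3 = 2) (m : ℕ) :
    (∑ q ∈ range (m*p), ((Nat.centralBinom q : ℕ) : ZMod p))
      = -(∑ q ∈ range m, ((Nat.centralBinom q : ℕ) : ZMod p)) := by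
  rw [sum_blocks]
  have inner : ∀ q : ℕ, (∑ r ∈ range p, ((Nat.centralBinom (q*p+r) : ℕ) : ZMod p))
      = -((Nat.centralBinom q : ℕ) : ZMod p) := by
    intro q
    rw [Finset.sum_congr rfl (fun r hr => cb_block hp3 hodd q r (mem_range.mp hr))]
    have : (∑ r ∈ range p, if 2*r < p then ((Nat.centralBinom q : ℕ) : ZMod p) * ((Nat.centralBinom r : ℕ) : ZMod p) else 0)
        = ((Nat.centralBinom q : ℕ) : ZMod p) * ∑ r ∈ range p, (if 2*r < p then ((Nat.centralBinom r : ℕ) : ZMod p) else 0) := by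
      rw [Finset.mul_sum]
      exact Finset.sum_congr rfl (fun r _ => by rw [mul_ite, mul_zero])
    rw [this, M_eq hp3 hodd h3, mul_neg_one]
  rw [Finset.sum_congr rfl (fun q _ => inner q), Finset.sum_neg_distrib]

private lemma S_rec (hp3 : 3 < p) (hodd : p % 2 = 1) (m : ℕ) :
    (∑ n ∈ range (m*p), ((catalan n : ℕ) : ZMod p))
      = ((∑ r ∈ range p, if 2*r < p then ((catalan r : ℕ) : ZMod p) else 0) - 2)
          * (∑ q ∈ range m, ((Nat.centralBinom q : ℕ) : ZMod p))
        + ∑ q ∈ range m, ((catalan q : ℕ) : ZMod p) := by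
  rw [sum_blocks]
  have inner : ∀ q : ℕ, (∑ r ∈ range p, ((catalan (q*p+r) : ℕ) : ZMod p))
      = ((Nat.centralBinom q : ℕ) : ZMod p)
          * (∑ r ∈ range p, if 2*r < p then ((catalan r : ℕ) : ZMod p) else 0)
        + (((catalan q : ℕ) : ZMod p) - 2 * ((Nat.centralBinom q : ℕ) : ZMod p)) := by
    intro q
    rw [Finset.sum_congr rfl (fun r hr => cat_block hp3 hodd q r (mem_range.mp hr))]
    have hsplit : ∀ r ∈ range p,
        (if 2*r < p then ((Nat.centralBinom q : ℕ) : ZMod p) * ((catalan r : ℕ) : ZMod p)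
         else if r = p - 1 then ((catalan q : ℕ) : ZMod p) - 2 * ((Nat.centralBinom q : ℕ) : ZMod p)
         else 0)
        = (if 2*r < p then ((Nat.centralBinom q : ℕ) : ZMod p) * ((catalan r : ℕ) : ZMod p) else 0)
          + (if r = p - 1 then ((catalan q : ℕ) : ZMod p) - 2 * ((Nat.centralBinom q : ℕ) : ZMod p) else 0) := by
      intro r hr
      rcases lt_or_ge (2*r) p with h1 | h1
      · rw [if_pos h1, if_pos h1, if_neg (by omega), add_zero]
      · simp only [if_neg (show ¬ 2*r < p by omega), zero_add]
    rw [Finset.sum_congr rfl hsplit, Finset.sum_add_distrib]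
    congr 1
    · rw [Finset.mul_sum]
      exact Finset.sum_congr rfl (fun r _ => by rw [mul_ite, mul_zero])
    · rw [Finset.sum_ite_eq' (range p) (p-1)]
      rw [if_pos (mem_range.mpr (by omega))]
  rw [Finset.sum_congr rfl (fun q _ => inner q), Finset.sum_add_distrib,
    ← Finset.sum_mul, Finset.sum_sub_distrib, ← Finset.mul_sum]
  ring

end aux3

theorem stmt14 (p a : ℕ) (hp : p.Prime) (hp3 : 3 < p) (h3 : p % 3 = 2) (ha : 1 ≤ a) (heven : Even a) :
    (∑ n ∈ Finset.range (p^a), (catalan n : ℤ)) ≡ 1 [ZMOD (p : ℤ)] := by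
  haveI : Fact p.Prime := ⟨hp⟩
  have hodd : p % 2 = 1 := Nat.odd_iff.mp (hp.odd_of_ne_two (by omega))
  have key : (∑ n ∈ Finset.range (p^a), ((catalan n : ℕ) : ZMod p)) = 1 := by
    obtain ⟨k, hk⟩ := heven
    subst hk
    clear ha
    induction k with
    | zero => simp
    | succ k ih =>
      have he : p^(k+1+(k+1)) = (p^(k+k) * p) * p := by ring
      rw [he, S_rec hp3 hodd (p^(k+k)*p), S_rec hp3 hodd (p^(k+k)),
        B_rec hp3 hodd h3 (p^(k+k)), ih]
      ring
  have := (ZMod.intCast_eq_intCast_iff (∑ n ∈ Finset.range (p^a), (catalan n : ℤ)) 1 p).mp ?_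
  · exact this
  · push_cast
    exact key.trans (by norm_num)
end
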